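/- Let G₀ be a semisimple graph and M a matroid on E(G₀) with rank function r having the d-dimensional 0-extension property. Suppose G = (V,E) ⊆ G₀ has minimum degree δ(G) ≥ d+2, and G has an M-seed K ⊆ V together with vertices u′, v′ ∈ V−K with u′v′ ∈ E and u′ ≠ v′. Then there exist vertices u, v ∈ V−K with uv ∈ E, u ≠ v, satisfying r(G) = r(G−u) + d = r(G−v) + d = r(G−u−v) + 2d. -/
import Mathlib


open Finset

/-- A semisimple graph: a finite vertex set together with a set of edges
(elements of `Sym2 ν`, so loops are allowed but there are no parallel edges),
each of whose endpoints lies in the vertex set. -/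
structure SSGraph (ν : Type*) [DecidableEq ν] where
  verts : Finset ν
  edges : Finset (Sym2 ν)
  incident : ∀ e ∈ edges, ∀ x ∈ e, x ∈ verts

namespace SSGraph

variable {ν : Type*} [DecidableEq ν]

/-- The subgraph relation. -/
def Sub (G H : SSGraph ν) : Prop := G.verts ⊆ H.verts ∧ G.edges ⊆ H.edges

/-- The set of vertices of `G` adjacent to `x` (including `x` itself if there is a loop at `x`). -/
def nbrs (G : SSGraph ν) (x : ν) : Finset ν :=
  G.verts.filter (fun y => s(x, y) ∈ G.edges)

/-- The degree of a vertex: the number of incident edges, counting a loop once. -/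
def deg (G : SSGraph ν) (v : ν) : ℕ := (G.edges.filter (fun e => v ∈ e)).card

/-- The edge set of the subgraph of `G` induced by `K`. -/
def induce (G : SSGraph ν) (K : Finset ν) : Finset (Sym2 ν) :=
  G.edges ∩ K.sym2

/-- Deletion of a vertex. -/
def del (G : SSGraph ν) (u : ν) : SSGraph ν where
  verts := G.verts.erase u
  edges := G.edges.filter (fun e => u ∉ e)
  incident := by
    intro e he x hx
    simp only [mem_filter] at he
    exact mem_erase.mpr ⟨fun h => he.2 (h ▸ hx), G.incident e he.1 x hx⟩

/-- `G₂` is obtained from `G₁` by a `d`-dimensional 0-extension: add a new vertex `v`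
joined to `d` vertices of `V(G₁) + v` (a loop at `v` being added if `v` is among them). -/
def IsZeroExt (d : ℕ) (G₁ G₂ : SSGraph ν) : Prop :=
  ∃ v ∉ G₁.verts, ∃ D : Finset ν, D ⊆ insert v G₁.verts ∧ D.card = d ∧
    G₂.verts = insert v G₁.verts ∧ G₂.edges = G₁.edges ∪ D.image (fun u => s(v, u))

/-- `G₂` is obtained from `G₁` by a `d`-dimensional double 1-extension on an edge `xy`. -/
def IsDouble1Ext (d : ℕ) (G₁ G₂ : SSGraph ν) : Prop :=
  ∃ x y, s(x, y) ∈ G₁.edges ∧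
  ∃ u v, u ∉ G₁.verts ∧ v ∉ G₁.verts ∧ u ≠ v ∧
  ∃ Du Dv : Finset ν,
    Du ⊆ insert u G₁.verts ∧ x ∈ Du ∧ Du.card = d ∧
    Dv ⊆ insert v G₁.verts ∧ y ∈ Dv ∧ Dv.card = d ∧
    G₂.verts = insert u (insert v G₁.verts) ∧
    G₂.edges = insert s(u, v)
      (((G₁.edges.erase s(x, y)) ∪ Du.image (fun w => s(u, w))) ∪ Dv.image (fun w => s(v, w)))

/-- `G₂` is obtained from `G₁` by a `d`-dimensional looped 1-extension on a non-loop edge `xy`. -/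
def IsLooped1Ext (d : ℕ) (G₁ G₂ : SSGraph ν) : Prop :=
  ∃ x y, x ≠ y ∧ s(x, y) ∈ G₁.edges ∧
  ∃ v ∉ G₁.verts, ∃ D : Finset ν, D ⊆ G₁.verts ∧ x ∈ D ∧ y ∈ D ∧ D.card = d ∧
    G₂.verts = insert v G₁.verts ∧
    G₂.edges = insert s(v, v) ((G₁.edges.erase s(x, y)) ∪ D.image (fun w => s(v, w)))

end SSGraph

variable {ν : Type*} [DecidableEq ν]

/-- `r` is the rank function of a matroid on the edges. -/
structure IsRankFn (r : Finset (Sym2 ν) → ℕ) : Prop where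
  empty : r ∅ = 0
  le_insert : ∀ A e, r A ≤ r (insert e A)
  insert_le : ∀ A e, r (insert e A) ≤ r A + 1
  submodular : ∀ A B, r (A ∪ B) + r (A ∩ B) ≤ r A + r B

/-- A graph is `M`-independent if its edge set is independent in the matroid with rank function `r`. -/
def Indep (r : Finset (Sym2 ν) → ℕ) (G : SSGraph ν) : Prop := r G.edges = G.edges.card

/-- The matroid with rank function `r` on the edges of `G₀` has the `d`-dimensional
0-extension property. -/
def ZeroExtProp (d : ℕ) (r : Finset (Sym2 ν) → ℕ) (G₀ : SSGraph ν) : Prop :=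
  ∀ G₁ G₂ : SSGraph ν, G₁.Sub G₀ → G₂.Sub G₀ → Indep r G₁ →
    SSGraph.IsZeroExt d G₁ G₂ → Indep r G₂

/-- The `d`-dimensional double 1-extension property. -/
def Double1ExtProp (d : ℕ) (r : Finset (Sym2 ν) → ℕ) (G₀ : SSGraph ν) : Prop :=
  ∀ G₁ G₂ : SSGraph ν, G₁.Sub G₀ → G₂.Sub G₀ → Indep r G₁ →
    SSGraph.IsDouble1Ext d G₁ G₂ → Indep r G₂

/-- The `d`-dimensional looped 1-extension property. -/
def Looped1ExtProp (d : ℕ) (r : Finset (Sym2 ν) → ℕ) (G₀ : SSGraph ν) : Prop :=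
  ∀ G₁ G₂ : SSGraph ν, G₁.Sub G₀ → G₂.Sub G₀ → Indep r G₁ →
    SSGraph.IsLooped1Ext d G₁ G₂ → Indep r G₂

/-- `K` is an `M`-seed of `G` with respect to `d`. -/
def IsSeed (d : ℕ) (r : Finset (Sym2 ν) → ℕ) (G : SSGraph ν) (K : Finset ν) : Prop :=
  K ⊆ G.verts ∧
  r G.edges = r (G.induce K) + d * (G.verts.card - K.card) ∧
  ∀ K' : Finset ν, K ⊆ K' → K' ⊂ G.verts →
    ∃ x ∈ G.verts \ K', d ≤ ((insert x K') ∩ G.nbrs x).card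


namespace SeedAux
set_option linter.unusedSectionVars false
open Finset SSGraph
variable {ν : Type*} [DecidableEq ν] {r : Finset (Sym2 ν) → ℕ}


variable {r : Finset (Sym2 ν) → ℕ}

lemma rank_le_union (hr : IsRankFn r) (A C : Finset (Sym2 ν)) : r A ≤ r (A ∪ C) := by
  induction C using Finset.induction_on with
  | empty => simp
  | @insert a s ha ih =>
    calc r A ≤ r (A ∪ s) := ih
    _ ≤ r (insert a (A ∪ s)) := hr.le_insert _ _
    _ = r (A ∪ insert a s) := by rw [Finset.union_insert]

lemma rank_mono (hr : IsRankFn r) {A B : Finset (Sym2 ν)} (h : A ⊆ B) : r A ≤ r B := by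
  have := rank_le_union hr A (B \ A)
  rwa [Finset.union_sdiff_of_subset h] at this

lemma rank_indep_of_coloops (hr : IsRankFn r) : ∀ n (A : Finset (Sym2 ν)), A.card = n →
    (∀ e ∈ A, r (A.erase e) + 1 = r A) → r A = A.card := by
  intro n
  induction n with
  | zero =>
    intro A hc _
    rw [Finset.card_eq_zero] at hc
    subst hc; simpa using hr.empty
  | succ n ih =>
    intro A hc h
    have hne : A.Nonempty := Finset.card_pos.mp (by omega)
    obtain ⟨e, he⟩ := hne
    have hA' : ∀ e' ∈ A.erase e, r ((A.erase e).erase e') + 1 = r (A.erase e) := by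
      intro e' he'
      obtain ⟨hne', heA'⟩ := Finset.mem_erase.mp he'
      have hsub := hr.submodular (A.erase e) (A.erase e')
      have hu : (A.erase e) ∪ (A.erase e') = A := by
        ext z; simp only [Finset.mem_union, Finset.mem_erase]
        constructor
        · rintro (⟨_, hz⟩ | ⟨_, hz⟩) <;> exact hz
        · intro hz
          by_cases hze : z = e
          · exact Or.inr ⟨by rw [hze]; exact fun hh => hne' hh.symm, hz⟩
          · exact Or.inl ⟨hze, hz⟩
      have hi : (A.erase e) ∩ (A.erase e') = (A.erase e).erase e' := by
        ext z; simp only [Finset.mem_inter, Finset.mem_erase]; tauto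
      rw [hu, hi] at hsub
      have h1 := h e he
      have h2 := h e' heA'
      have h3 : r (A.erase e) ≤ r ((A.erase e).erase e') + 1 := by
        have := hr.insert_le ((A.erase e).erase e') e'
        rwa [Finset.insert_erase he'] at this
      omega
    have hcard : (A.erase e).card = n := by rw [Finset.card_erase_of_mem he]; omega
    have := ih (A.erase e) hcard hA'
    have h1 := h e he
    rw [hcard] at this
    omega

lemma exists_basis (hr : IsRankFn r) : ∀ n (A : Finset (Sym2 ν)), A.card ≤ n →
    ∃ B ⊆ A, r B = B.card ∧ r B = r A := by
  intro n
  induction n with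
  | zero =>
    intro A hc
    have : A = ∅ := Finset.card_eq_zero.mp (by omega)
    subst this
    exact ⟨∅, subset_rfl, by simpa using hr.empty, rfl⟩
  | succ n ih =>
    intro A hc
    by_cases h : ∀ e ∈ A, r (A.erase e) + 1 = r A
    · exact ⟨A, subset_rfl, rank_indep_of_coloops hr A.card A rfl h, rfl⟩
    · push_neg at h
      obtain ⟨e, he, hne⟩ := h
      have hle : r A ≤ r (A.erase e) + 1 := by
        have := hr.insert_le (A.erase e) e
        rwa [Finset.insert_erase he] at this
      have hge : r (A.erase e) ≤ r A := rank_mono hr (Finset.erase_subset _ _)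
      have heq : r (A.erase e) = r A := by omega
      have hcard : (A.erase e).card ≤ n := by
        rw [Finset.card_erase_of_mem he]
        have : 1 ≤ A.card := Finset.card_pos.mpr ⟨e, he⟩
        omega
      obtain ⟨B, hBsub, hB1, hB2⟩ := ih (A.erase e) hcard
      exact ⟨B, hBsub.trans (Finset.erase_subset _ _), hB1, by rw [hB2, heq]⟩



lemma sym2_cases (e : Sym2 ν) : ∃ a b, e = s(a, b) := by
  induction e using Sym2.ind with
  | _ a b => exact ⟨a, b, rfl⟩

lemma del_edges_eq (G : SSGraph ν) (u : ν) :
    (G.del u).edges = G.induce (G.verts.erase u) := by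
  ext e
  simp only [SSGraph.del, SSGraph.induce, Finset.mem_filter, Finset.mem_inter,
    Finset.mem_sym2_iff]
  constructor
  · rintro ⟨he, hu⟩
    exact ⟨he, fun z hz => Finset.mem_erase.mpr ⟨fun h => hu (h ▸ hz), G.incident e he z hz⟩⟩
  · rintro ⟨he, hs⟩
    exact ⟨he, fun hu => (Finset.mem_erase.mp (hs u hu)).1 rfl⟩

lemma deldel_edges_eq (G : SSGraph ν) (u v : ν) :
    ((G.del u).del v).edges = G.induce ((G.verts.erase u).erase v) := by
  ext e
  simp only [SSGraph.del, SSGraph.induce, Finset.mem_filter, Finset.mem_inter,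
    Finset.mem_sym2_iff, Finset.mem_erase]
  constructor
  · rintro ⟨⟨he, hu⟩, hv⟩
    exact ⟨he, fun z hz => ⟨fun h => hv (h ▸ hz), fun h => hu (h ▸ hz), G.incident e he z hz⟩⟩
  · rintro ⟨he, hs⟩
    exact ⟨⟨he, fun hu => (hs u hu).2.1 rfl⟩, fun hv => (hs v hv).1 rfl⟩

lemma induce_verts (G : SSGraph ν) : G.induce G.verts = G.edges := by
  ext e
  simp only [SSGraph.induce, Finset.mem_inter, Finset.mem_sym2_iff]
  exact ⟨fun h => h.1, fun h => ⟨h, fun z hz => G.incident e h z hz⟩⟩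

lemma deg_le_nbrs (G : SSGraph ν) (x : ν) : G.deg x ≤ (G.nbrs x).card := by
  have hsub : G.edges.filter (fun e => x ∈ e) ⊆ (G.nbrs x).image (fun y => s(x, y)) := by
    intro e he
    simp only [Finset.mem_filter] at he
    obtain ⟨he, hx⟩ := he
    obtain ⟨a, b, rfl⟩ := sym2_cases e
    rcases Sym2.mem_iff.mp hx with h | h
    · subst h
      refine Finset.mem_image.mpr ⟨b, ?_, rfl⟩
      exact Finset.mem_filter.mpr ⟨G.incident _ he b (Sym2.mem_mk_right _ _), he⟩
    · subst h
      refine Finset.mem_image.mpr ⟨a, ?_, ?_⟩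
      · refine Finset.mem_filter.mpr ⟨G.incident _ he a (Sym2.mem_mk_left _ _), ?_⟩
        rwa [Sym2.eq_swap]
      · rw [Sym2.eq_swap]
  calc G.deg x ≤ ((G.nbrs x).image (fun y => s(x, y))).card := Finset.card_le_card hsub
  _ ≤ (G.nbrs x).card := Finset.card_image_le








lemma step_lemma {d : ℕ} {G₀ G : SSGraph ν} {r : Finset (Sym2 ν) → ℕ}
    (hr : IsRankFn r) (hext : ZeroExtProp d r G₀) (hG : G.Sub G₀)
    {S : Finset ν} {x : ν} (hS : S ⊆ G.verts) (hxv : x ∈ G.verts) (hxS : x ∉ S)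
    (hd : d ≤ ((insert x S) ∩ G.nbrs x).card) :
    r (G.induce S) + d ≤ r (G.induce (insert x S)) := by
  obtain ⟨B, hBsub, hBind, hBr⟩ := exists_basis hr (G.induce S).card (G.induce S) le_rfl
  obtain ⟨D, hDsub, hDcard⟩ := Finset.exists_subset_card_eq hd
  have hBsym : B ⊆ S.sym2 := fun e he => (Finset.mem_inter.mp (hBsub he)).2
  have hBedges : B ⊆ G.edges := fun e he => (Finset.mem_inter.mp (hBsub he)).1
  have hDins : D ⊆ insert x S := fun u hu => (Finset.mem_inter.mp (hDsub hu)).1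
  have hDnbr : D ⊆ G.nbrs x := fun u hu => (Finset.mem_inter.mp (hDsub hu)).2
  set E₂ : Finset (Sym2 ν) := B ∪ D.image (fun u => s(x, u)) with hE₂
  have hG₁ : ∀ e ∈ B, ∀ z ∈ e, z ∈ S := by
    intro e he z hz
    exact Finset.mem_sym2_iff.mp (hBsym he) z hz
  set G₁ : SSGraph ν := ⟨S, B, hG₁⟩ with hG₁def
  have hG₂inc : ∀ e ∈ E₂, ∀ z ∈ e, z ∈ insert x S := by
    intro e he z hz
    rcases Finset.mem_union.mp he with h | h
    · exact Finset.mem_insert_of_mem (hG₁ e h z hz)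
    · obtain ⟨u, hu, rfl⟩ := Finset.mem_image.mp h
      rcases Sym2.mem_iff.mp hz with h | h
      · exact h ▸ Finset.mem_insert_self x S
      · exact h ▸ hDins hu
  set G₂ : SSGraph ν := ⟨insert x S, E₂, hG₂inc⟩ with hG₂def
  have hnbr_edge : ∀ u ∈ G.nbrs x, s(x, u) ∈ G.edges := by
    intro u hu
    exact (Finset.mem_filter.mp hu).2
  have hsub1 : G₁.Sub G₀ := ⟨hS.trans hG.1, fun e he => hG.2 (hBedges he)⟩
  have hE₂G : E₂ ⊆ G.edges := by
    intro e he
    rcases Finset.mem_union.mp he with h | h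
    · exact hBedges h
    · obtain ⟨u, hu, rfl⟩ := Finset.mem_image.mp h
      exact hnbr_edge u (hDnbr hu)
  have hsub2 : G₂.Sub G₀ := by
    refine ⟨?_, fun e he => hG.2 (hE₂G he)⟩
    intro z hz
    rcases Finset.mem_insert.mp hz with h | h
    · exact h ▸ hG.1 hxv
    · exact hG.1 (hS h)
  have hind1 : Indep r G₁ := hBind
  have hzext : SSGraph.IsZeroExt d G₁ G₂ :=
    ⟨x, hxS, D, hDins, hDcard, rfl, rfl⟩
  have hind2 : Indep r G₂ := hext G₁ G₂ hsub1 hsub2 hind1 hzext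
  have hdisj : Disjoint B (D.image (fun u => s(x, u))) := by
    rw [Finset.disjoint_right]
    intro e he heB
    obtain ⟨u, hu, rfl⟩ := Finset.mem_image.mp he
    exact hxS (Finset.mem_sym2_iff.mp (hBsym heB) x (Sym2.mem_mk_left _ _))
  have hinj : Set.InjOn (fun u => s(x, u)) D := by
    intro a _ b _ hab
    exact Sym2.congr_right.mp hab
  have hcard2 : E₂.card = B.card + d := by
    rw [hE₂, Finset.card_union_of_disjoint hdisj, Finset.card_image_of_injOn hinj, hDcard]
  have hE₂ind : r E₂ = B.card + d := by rw [hind2]; exact hcard2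
  have hE₂sub : E₂ ⊆ G.induce (insert x S) := by
    intro e he
    refine Finset.mem_inter.mpr ⟨hE₂G he, ?_⟩
    exact Finset.mem_sym2_iff.mpr (hG₂inc e he)
  calc r (G.induce S) + d = B.card + d := by rw [← hBr, hBind]
  _ = r E₂ := hE₂ind.symm
  _ ≤ r (G.induce (insert x S)) := rank_mono hr hE₂sub



end SeedAux

/-- if `δ(G) ≥ d+2` and `G` has an `M`-seed `K` together with an edge
`u′v′` with `u′,v′ ∈ V − K`, `u′ ≠ v′`, then there are `u,v ∈ V − K` with `uv ∈ E`,
`u ≠ v` and `r(G) = r(G−u)+d = r(G−v)+d = r(G−u−v)+2d`. -/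
theorem deletable_vertices
    {ν : Type*} [DecidableEq ν] (d : ℕ) (G₀ : SSGraph ν)
    (r : Finset (Sym2 ν) → ℕ) (hr : IsRankFn r) (hext : ZeroExtProp d r G₀)
    (G : SSGraph ν) (hG : G.Sub G₀)
    (hδ : ∀ w ∈ G.verts, d + 2 ≤ G.deg w)
    (K : Finset ν) (hK : IsSeed d r G K)
    (u' v' : ν) (hu' : u' ∈ G.verts \ K) (hv' : v' ∈ G.verts \ K)
    (hne' : u' ≠ v') (he' : s(u', v') ∈ G.edges) :
    ∃ u v : ν, u ∈ G.verts \ K ∧ v ∈ G.verts \ K ∧ u ≠ v ∧ s(u, v) ∈ G.edges ∧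
      r G.edges = r (G.del u).edges + d ∧
      r G.edges = r (G.del v).edges + d ∧
      r G.edges = r ((G.del u).del v).edges + 2 * d := by
  classical
  obtain ⟨hKv, hKrank, hKseed⟩ := hK
  -- Lemma A: the chain lower bound
  have lemA : ∀ j (S : Finset ν), K ⊆ S → S ⊆ G.verts → (G.verts \ S).card ≤ j →
      r (G.induce S) + d * (G.verts \ S).card ≤ r G.edges := by
    intro j
    induction j with
    | zero =>
      intro S hKS hSv hc
      have h0 : (G.verts \ S).card = 0 := by omega
      have hempty : G.verts \ S = ∅ := Finset.card_eq_zero.mp h0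
      have hSeq : S = G.verts := by
        apply Finset.Subset.antisymm hSv
        intro z hz
        by_contra h
        exact absurd (Finset.mem_sdiff.mpr ⟨hz, h⟩) (by rw [hempty]; exact Finset.notMem_empty z)
      rw [h0, hSeq, SeedAux.induce_verts, Nat.mul_zero, Nat.add_zero]
    | succ j ihj =>
      intro S hKS hSv hc
      by_cases hS : S = G.verts
      · have h0 : (G.verts \ S).card = 0 := by rw [hS]; simp
        rw [h0, hS, SeedAux.induce_verts, Nat.mul_zero, Nat.add_zero]
      · have hss : S ⊂ G.verts := Finset.ssubset_iff_subset_ne.mpr ⟨hSv, hS⟩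
        obtain ⟨x, hx, hdx⟩ := hKseed S hKS hss
        obtain ⟨hxv, hxS⟩ := Finset.mem_sdiff.mp hx
        have hstep := SeedAux.step_lemma hr hext hG hSv hxv hxS hdx
        have hde : G.verts \ insert x S = (G.verts \ S).erase x := by
          ext w
          simp only [Finset.mem_sdiff, Finset.mem_erase, Finset.mem_insert]
          tauto
        have hc2 : (G.verts \ insert x S).card = (G.verts \ S).card - 1 := by
          rw [hde, Finset.card_erase_of_mem hx]
        have hpos : 1 ≤ (G.verts \ S).card := Finset.card_pos.mpr ⟨x, hx⟩
        obtain ⟨c, hcEq⟩ : ∃ c, (G.verts \ S).card = c + 1 := ⟨(G.verts \ S).card - 1, by omega⟩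
        have hc2' : (G.verts \ insert x S).card = c := by omega
        have hih := ihj (insert x S) (hKS.trans (Finset.subset_insert _ _))
          (Finset.insert_subset hxv hSv) (by omega)
        calc r (G.induce S) + d * (G.verts \ S).card
            = (r (G.induce S) + d) + d * c := by rw [hcEq]; ring
          _ ≤ r (G.induce (insert x S)) + d * c := Nat.add_le_add_right hstep _
          _ = r (G.induce (insert x S)) + d * (G.verts \ insert x S).card := by rw [hc2']
          _ ≤ r G.edges := hih
  -- tightness extension
  have text : ∀ (S : Finset ν) (x : ν), K ⊆ S → S ⊆ G.verts →
      r G.edges = r (G.induce S) + d * (G.verts \ S).card →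
      x ∈ G.verts \ S → d ≤ ((insert x S) ∩ G.nbrs x).card →
      K ⊆ insert x S ∧ insert x S ⊆ G.verts ∧
        r G.edges = r (G.induce (insert x S)) + d * (G.verts \ insert x S).card := by
    intro S x hKS hSv htight hx hdx
    obtain ⟨hxv, hxS⟩ := Finset.mem_sdiff.mp hx
    have hstep := SeedAux.step_lemma hr hext hG hSv hxv hxS hdx
    have hKS' : K ⊆ insert x S := hKS.trans (Finset.subset_insert _ _)
    have hSv' : insert x S ⊆ G.verts := Finset.insert_subset hxv hSv
    have hde : G.verts \ insert x S = (G.verts \ S).erase x := by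
      ext w
      simp only [Finset.mem_sdiff, Finset.mem_erase, Finset.mem_insert]
      tauto
    have hc2 : (G.verts \ insert x S).card = (G.verts \ S).card - 1 := by
      rw [hde, Finset.card_erase_of_mem hx]
    have hpos : 1 ≤ (G.verts \ S).card := Finset.card_pos.mpr ⟨x, hx⟩
    obtain ⟨c, hcEq⟩ : ∃ c, (G.verts \ S).card = c + 1 := ⟨(G.verts \ S).card - 1, by omega⟩
    have hc2' : (G.verts \ insert x S).card = c := by omega
    refine ⟨hKS', hSv', le_antisymm ?_ ?_⟩
    · calc r G.edges = r (G.induce S) + d * (G.verts \ S).card := htight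
        _ = (r (G.induce S) + d) + d * c := by rw [hcEq]; ring
        _ ≤ r (G.induce (insert x S)) + d * c := Nat.add_le_add_right hstep _
        _ = r (G.induce (insert x S)) + d * (G.verts \ insert x S).card := by rw [hc2']
    · exact lemA (G.verts \ insert x S).card (insert x S) hKS' hSv' le_rfl
  -- neighbour cardinality bound
  have hnb : ∀ x ∈ G.verts, d + 2 ≤ (G.nbrs x).card :=
    fun x hx => le_trans (hδ x hx) (SeedAux.deg_le_nbrs G x)
  have addable : ∀ (S : Finset ν) (x : ν), x ∈ G.verts →
      ((G.nbrs x) \ insert x S).card ≤ 2 → d ≤ ((insert x S) ∩ G.nbrs x).card := by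
    intro S x hxv hc
    have h1 := Finset.card_inter_add_card_sdiff (G.nbrs x) (insert x S)
    have h2 := hnb x hxv
    have h3 : ((insert x S) ∩ G.nbrs x).card = (G.nbrs x ∩ insert x S).card := by
      rw [Finset.inter_comm]
    omega
  -- main induction
  have main : ∀ m (S : Finset ν), (G.verts \ S).card ≤ m →
      K ⊆ S → S ⊆ G.verts →
      r G.edges = r (G.induce S) + d * (G.verts \ S).card →
      ∀ x y : ν, x ∈ G.verts \ S → y ∈ G.verts \ S → x ≠ y → s(x, y) ∈ G.edges →
      ∃ u v : ν, u ∈ G.verts \ K ∧ v ∈ G.verts \ K ∧ u ≠ v ∧ s(u, v) ∈ G.edges ∧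
        r G.edges = r (G.del u).edges + d ∧
        r G.edges = r (G.del v).edges + d ∧
        r G.edges = r ((G.del u).del v).edges + 2 * d := by
    intro m
    induction m using Nat.strong_induction_on with
    | _ m ih =>
    intro S hm hKS hSv htight x y hx hy hxy hedge
    obtain ⟨hxv, hxS⟩ := Finset.mem_sdiff.mp hx
    obtain ⟨hyv, hyS⟩ := Finset.mem_sdiff.mp hy
    have hpair : ({x, y} : Finset ν) ⊆ G.verts \ S :=
      Finset.insert_subset hx (Finset.singleton_subset_iff.mpr hy)
    have h2le : 2 ≤ (G.verts \ S).card := by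
      calc 2 = ({x, y} : Finset ν).card := (Finset.card_pair hxy).symm
        _ ≤ (G.verts \ S).card := Finset.card_le_card hpair
    by_cases hment : (G.verts \ S).card = 2
    · -- base case
      have hdiff : ({x, y} : Finset ν) = G.verts \ S :=
        Finset.eq_of_subset_of_card_le hpair (by rw [hment, Finset.card_pair hxy])
      have hch : ∀ z, z ∈ G.verts ↔ z ∈ S ∨ z = x ∨ z = y := by
        intro z
        constructor
        · intro hzv
          by_cases h : z ∈ S
          · exact Or.inl h
          · have : z ∈ ({x, y} : Finset ν) := by
              rw [hdiff]; exact Finset.mem_sdiff.mpr ⟨hzv, h⟩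
            rcases Finset.mem_insert.mp this with h1 | h1
            · exact Or.inr (Or.inl h1)
            · exact Or.inr (Or.inr (Finset.mem_singleton.mp h1))
        · rintro (h | rfl | rfl)
          · exact hSv h
          · exact hxv
          · exact hyv
      have haddx : d ≤ ((insert x S) ∩ G.nbrs x).card := by
        apply addable S x hxv
        have hsub : G.nbrs x \ insert x S ⊆ {y} := by
          intro z hz
          obtain ⟨hz1, hz2⟩ := Finset.mem_sdiff.mp hz
          have hzv : z ∈ G.verts := (Finset.mem_filter.mp hz1).1
          rcases (hch z).mp hzv with h | h | h
          · exact absurd (Finset.mem_insert_of_mem h) hz2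
          · exact absurd (h ▸ Finset.mem_insert_self x S) hz2
          · exact Finset.mem_singleton.mpr h
        calc (G.nbrs x \ insert x S).card ≤ ({y} : Finset ν).card := Finset.card_le_card hsub
          _ ≤ 2 := by simp
      have haddy : d ≤ ((insert y S) ∩ G.nbrs y).card := by
        apply addable S y hyv
        have hsub : G.nbrs y \ insert y S ⊆ {x} := by
          intro z hz
          obtain ⟨hz1, hz2⟩ := Finset.mem_sdiff.mp hz
          have hzv : z ∈ G.verts := (Finset.mem_filter.mp hz1).1
          rcases (hch z).mp hzv with h | h | h
          · exact absurd (Finset.mem_insert_of_mem h) hz2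
          · exact Finset.mem_singleton.mpr h
          · exact absurd (h ▸ Finset.mem_insert_self y S) hz2
        calc (G.nbrs y \ insert y S).card ≤ ({x} : Finset ν).card := Finset.card_le_card hsub
          _ ≤ 2 := by simp
      obtain ⟨_, _, htx⟩ := text S x hKS hSv htight hx haddx
      obtain ⟨_, _, hty⟩ := text S y hKS hSv htight hy haddy
      have hdx : G.verts \ insert x S = {y} := by
        ext z
        simp only [Finset.mem_sdiff, Finset.mem_insert, Finset.mem_singleton]
        constructor
        · rintro ⟨hzv, hzni⟩
          push_neg at hzni
          rcases (hch z).mp hzv with h | h | h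
          · exact absurd h hzni.2
          · exact absurd h hzni.1
          · exact h
        · rintro rfl
          exact ⟨hyv, fun h => h.elim (fun e => hxy e.symm) hyS⟩
      have hdy : G.verts \ insert y S = {x} := by
        ext z
        simp only [Finset.mem_sdiff, Finset.mem_insert, Finset.mem_singleton]
        constructor
        · rintro ⟨hzv, hzni⟩
          push_neg at hzni
          rcases (hch z).mp hzv with h | h | h
          · exact absurd h hzni.2
          · exact h
          · exact absurd h hzni.1
        · rintro rfl
          exact ⟨hxv, fun h => h.elim hxy hxS⟩
      have hex : G.verts.erase x = insert y S := by
        ext z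
        simp only [Finset.mem_erase, Finset.mem_insert]
        constructor
        · rintro ⟨hzx, hzv⟩
          rcases (hch z).mp hzv with h | h | h
          · exact Or.inr h
          · exact absurd h hzx
          · exact Or.inl h
        · rintro (rfl | h)
          · exact ⟨fun e => hxy e.symm, hyv⟩
          · exact ⟨fun e => hxS (e ▸ h), hSv h⟩
      have hey : G.verts.erase y = insert x S := by
        ext z
        simp only [Finset.mem_erase, Finset.mem_insert]
        constructor
        · rintro ⟨hzy, hzv⟩
          rcases (hch z).mp hzv with h | h | h
          · exact Or.inr h
          · exact Or.inl h
          · exact absurd h hzy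
        · rintro (rfl | h)
          · exact ⟨hxy, hxv⟩
          · exact ⟨fun e => hyS (e ▸ h), hSv h⟩
      have hsxy : (G.verts.erase x).erase y = S := by
        ext z
        simp only [Finset.mem_erase]
        constructor
        · rintro ⟨hzy, hzx, hzv⟩
          rcases (hch z).mp hzv with h | h | h
          · exact h
          · exact absurd h hzx
          · exact absurd h hzy
        · intro h
          exact ⟨fun e => hyS (e ▸ h), fun e => hxS (e ▸ h), hSv h⟩
      refine ⟨x, y, Finset.mem_sdiff.mpr ⟨hxv, fun h => hxS (hKS h)⟩,
        Finset.mem_sdiff.mpr ⟨hyv, fun h => hyS (hKS h)⟩, hxy, hedge, ?_, ?_, ?_⟩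
      · rw [SeedAux.del_edges_eq, hex]
        rw [hdy, Finset.card_singleton, Nat.mul_one] at hty
        exact hty
      · rw [SeedAux.del_edges_eq, hey]
        rw [hdx, Finset.card_singleton, Nat.mul_one] at htx
        exact htx
      · rw [SeedAux.deldel_edges_eq, hsxy]
        rw [hment] at htight
        rw [htight]; ring
    · -- step case
      have h3le : 3 ≤ (G.verts \ S).card := by omega
      by_cases hzex : ∃ z ∈ G.verts \ S, z ≠ x ∧ z ≠ y ∧ d ≤ ((insert z S) ∩ G.nbrs z).card
      · obtain ⟨z, hzd, hzx, hzy, hzadd⟩ := hzex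
        obtain ⟨hzv, hzS⟩ := Finset.mem_sdiff.mp hzd
        obtain ⟨hK1, hS1, ht1⟩ := text S z hKS hSv htight hzd hzadd
        have hde : G.verts \ insert z S = (G.verts \ S).erase z := by
          ext w
          simp only [Finset.mem_sdiff, Finset.mem_erase, Finset.mem_insert]
          tauto
        have hc2 : (G.verts \ insert z S).card = (G.verts \ S).card - 1 := by
          rw [hde, Finset.card_erase_of_mem hzd]
        exact ih ((G.verts \ S).card - 1) (by omega) (insert z S) (by omega) hK1 hS1 ht1 x y
          (Finset.mem_sdiff.mpr ⟨hxv, fun h =>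
            (Finset.mem_insert.mp h).elim (fun e => hzx e.symm) hxS⟩)
          (Finset.mem_sdiff.mpr ⟨hyv, fun h =>
            (Finset.mem_insert.mp h).elim (fun e => hzy e.symm) hyS⟩)
          hxy hedge
      · push_neg at hzex
        have hss : S ⊂ G.verts :=
          (Finset.ssubset_iff_of_subset hSv).mpr ⟨x, hxv, hxS⟩
        obtain ⟨w, hw, hwadd⟩ := hKseed S hKS hss
        have hwxy : w = x ∨ w = y := by
          by_contra hcon
          push_neg at hcon
          exact absurd hwadd (Nat.not_le.mpr (hzex w hw hcon.1 hcon.2))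
        have key : ∀ a b : ν, a ∈ G.verts \ S → b ∈ G.verts \ S → a ≠ b →
            s(a, b) ∈ G.edges →
            (∀ z ∈ G.verts \ S, z ≠ a → z ≠ b → ((insert z S) ∩ G.nbrs z).card < d) →
            d ≤ ((insert a S) ∩ G.nbrs a).card →
            ∃ u v : ν, u ∈ G.verts \ K ∧ v ∈ G.verts \ K ∧ u ≠ v ∧ s(u, v) ∈ G.edges ∧
              r G.edges = r (G.del u).edges + d ∧
              r G.edges = r (G.del v).edges + d ∧
              r G.edges = r ((G.del u).del v).edges + 2 * d := by
          intro a b ha hb hab hedgeab hnadd hadda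
          obtain ⟨hav, haS⟩ := Finset.mem_sdiff.mp ha
          obtain ⟨hbv, hbS⟩ := Finset.mem_sdiff.mp hb
          obtain ⟨hK1, hS1, ht1⟩ := text S a hKS hSv htight ha hadda
          have hnsub : ¬ (G.verts \ S ⊆ {a, b}) := by
            intro hsub
            have h1 := Finset.card_le_card hsub
            have h2 : ({a, b} : Finset ν).card ≤ 2 := Finset.card_insert_le a {b}
            omega
          obtain ⟨z, hzd, hznot⟩ := Finset.not_subset.mp hnsub
          have hza : z ≠ a := fun h => hznot (h ▸ Finset.mem_insert_self a {b})
          have hzb : z ≠ b := fun h =>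
            hznot (by rw [h]; exact Finset.mem_insert_of_mem (Finset.mem_singleton_self b))
          obtain ⟨hzv, hzS⟩ := Finset.mem_sdiff.mp hzd
          have hzsmall := hnadd z hzd hza hzb
          have h1 := Finset.card_inter_add_card_sdiff (G.nbrs z) (insert z S)
          have h2 := hnb z hzv
          have h3 : ((insert z S) ∩ G.nbrs z).card = (G.nbrs z ∩ insert z S).card := by
            rw [Finset.inter_comm]
          have h4 : 3 ≤ (G.nbrs z \ insert z S).card := by omega
          have hns2 : ¬ (G.nbrs z \ insert z S ⊆ {a}) := by
            intro hsub
            have := Finset.card_le_card hsub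
            simp only [Finset.card_singleton] at this
            omega
          obtain ⟨y', hy', hy'a⟩ := Finset.not_subset.mp hns2
          have hy'a' : y' ≠ a := fun h => hy'a (h ▸ Finset.mem_singleton_self a)
          obtain ⟨hy'n, hy'ns⟩ := Finset.mem_sdiff.mp hy'
          have hy'v : y' ∈ G.verts := (Finset.mem_filter.mp hy'n).1
          have hedge' : s(z, y') ∈ G.edges := (Finset.mem_filter.mp hy'n).2
          have hy'z : y' ≠ z := fun h => hy'ns (h ▸ Finset.mem_insert_self z S)
          have hy'S : y' ∉ S := fun h => hy'ns (Finset.mem_insert_of_mem h)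
          have hde : G.verts \ insert a S = (G.verts \ S).erase a := by
            ext w'
            simp only [Finset.mem_sdiff, Finset.mem_erase, Finset.mem_insert]
            tauto
          have hc2 : (G.verts \ insert a S).card = (G.verts \ S).card - 1 := by
            rw [hde, Finset.card_erase_of_mem ha]
          exact ih ((G.verts \ S).card - 1) (by omega) (insert a S) (by omega) hK1 hS1 ht1 z y'
            (Finset.mem_sdiff.mpr ⟨hzv, fun h =>
              (Finset.mem_insert.mp h).elim hza hzS⟩)
            (Finset.mem_sdiff.mpr ⟨hy'v, fun h =>
              (Finset.mem_insert.mp h).elim hy'a' hy'S⟩)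
            (fun h => hy'z h.symm) hedge'
        rcases hwxy with h | h
        · subst h
          exact key w y hx hy hxy hedge (fun z hz h1 h2 => hzex z hz h1 h2) hwadd
        · subst h
          exact key w x hy hx hxy.symm (by rw [Sym2.eq_swap]; exact hedge)
            (fun z hz h1 h2 => hzex z hz h2 h1) hwadd
  -- apply main
  have htightK : r G.edges = r (G.induce K) + d * (G.verts \ K).card := by
    rw [Finset.card_sdiff_of_subset hKv]; exact hKrank
  exact main (G.verts \ K).card K le_rfl subset_rfl hKv htightK u' v' hu' hv' hne' he'
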